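/- Let κ be a regular cardinal, (Q, ≤) a κ-cc partial order and (P, ≤) a strongly <κ-distributive partial order, and equip Q × P with the product order ((q', p') ≤ (q, p) iff q' ≤ q and p' ≤ p). If D ⊆ Q × P is open dense and q ∈ Q, then the set D_q consisting of all p ∈ P such that there exists a maximal antichain A below q in Q with A × {p} ⊆ D is open dense in P. -/

import Mathlib

open Cardinal

universe u w

/-- `D` is open (downward closed) and dense in the partial order `P`. -/
def OpenDense {P : Type u} [Preorder P] (D : Set P) : Prop :=
  (∀ p ∈ D, ∀ q, q ≤ p → q ∈ D) ∧ ∀ p : P, ∃ q, q ≤ p ∧ q ∈ D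

/-- `P` is strongly `<κ`-distributive: for every `κ`-sequence of open dense sets and
every `p` there is a descending sequence (a thread) below `p` meeting them in order. -/
def StronglyDistrib (κ : Cardinal.{v}) (P : Type u) [Preorder P] : Prop :=
  ∀ D : Ordinal.{v} → Set P, (∀ α < κ.ord, OpenDense (D α)) → ∀ p : P,
    ∃ f : Ordinal.{v} → P, f 0 ≤ p ∧
      (∀ β α, β ≤ α → α < κ.ord → f α ≤ f β) ∧
      ∀ α < κ.ord, f α ∈ D α

/-- `P` is `<κ`-distributive: intersections of fewer than `κ` open dense sets are dense. -/
def DistribLt (κ : Cardinal.{v}) (P : Type u) [Preorder P] : Prop :=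
  ∀ γ < κ.ord, ∀ D : Ordinal.{v} → Set P, (∀ α < γ, OpenDense (D α)) →
    ∀ p : P, ∃ q, q ≤ p ∧ ∀ α < γ, q ∈ D α

/-- Two conditions are compatible if they have a common lower bound. -/
def Compat {P : Type u} [Preorder P] (p q : P) : Prop := ∃ r, r ≤ p ∧ r ≤ q

/-- An antichain: a set of pairwise incompatible conditions. -/
def IsAntichainIncompat {P : Type u} [Preorder P] (A : Set P) : Prop :=
  ∀ p ∈ A, ∀ q ∈ A, p ≠ q → ¬Compat p q

/-- `A` is a maximal antichain below `p`. -/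
def MaxAntichainBelow {P : Type u} [Preorder P] (p : P) (A : Set P) : Prop :=
  IsAntichainIncompat A ∧ (∀ a ∈ A, a ≤ p) ∧ ∀ q, q ≤ p → ∃ a ∈ A, Compat q a

/-- `A` refines `B`: every element of `A` lies below an element of `B`. -/
def Refines {P : Type u} [Preorder P] (A B : Set P) : Prop :=
  ∀ a ∈ A, ∃ b ∈ B, a ≤ b

set_option linter.unusedSectionVars false

section SEaux

variable {Q : Type u} {P : Type w} [PartialOrder Q] [PartialOrder P]

lemma compat_self (a : Q) : Compat a a := ⟨a, le_refl a, le_refl a⟩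

lemma compat_symm {a b : Q} : Compat a b → Compat b a := fun ⟨r, h1, h2⟩ => ⟨r, h2, h1⟩

lemma compat_mono {a a' b : Q} (h : Compat a' b) (hle : a' ≤ a) : Compat a b :=
  let ⟨r, h1, h2⟩ := h; ⟨r, le_trans h1 hle, h2⟩

/-- least element of a nonempty subset of `Q` in a fixed well-ordering -/
noncomputable def wmin (S : Set Q) (hS : S.Nonempty) : Q :=
  (IsWellFounded.wf (r := (WellOrderingRel : Q → Q → Prop))).min S hS

lemma wmin_mem (S : Set Q) (hS : S.Nonempty) : wmin S hS ∈ S := WellFounded.min_mem _ S hS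

lemma wmin_congr {S S' : Set Q} (h : S = S') (h1 : S.Nonempty) (h2 : S'.Nonempty) :
    wmin S h1 = wmin S' h2 := by subst h; rfl

lemma wmin_eq_of_subset {S S' : Set Q} (hsub : S' ⊆ S) (hS : S.Nonempty) (hS' : S'.Nonempty)
    (hmem : wmin S hS ∈ S') : wmin S' hS' = wmin S hS := by
  rcases trichotomous_of (WellOrderingRel : Q → Q → Prop) (wmin S' hS') (wmin S hS) with h | h | h
  · exact absurd h (WellFounded.not_lt_min _ S (hsub (wmin_mem S' hS')))
  · exact h
  · exact absurd h (WellFounded.not_lt_min _ S' hmem)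

/-- `X` is predense below `q` -/
def PredB (q : Q) (X : Set Q) : Prop := ∀ w, w ≤ q → ∃ a ∈ X, Compat w a

lemma predB_mono {q : Q} {X Y : Set Q} (h : PredB q X) (hXY : X ⊆ Y) : PredB q Y :=
  fun w hw => let ⟨a, ha, hc⟩ := h w hw; ⟨a, hXY ha, hc⟩

/-- a canonical condition below `q` incompatible with everything in `X` (junk if none) -/
noncomputable def rc (q : Q) (X : Set Q) : Q :=
  letI := Classical.propDecidable (∃ w, w ≤ q ∧ ∀ a ∈ X, ¬ Compat w a)
  if h : ∃ w, w ≤ q ∧ ∀ a ∈ X, ¬ Compat w a then h.choose else q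

lemma rc_le (q : Q) (X : Set Q) : rc q X ≤ q := by
  unfold rc
  split
  · next h => exact h.choose_spec.1
  · exact le_refl q

lemma rc_spec {q : Q} {X : Set Q} (h : ¬ PredB q X) : ∀ a ∈ X, ¬ Compat (rc q X) a := by
  have h' : ∃ w, w ≤ q ∧ ∀ a ∈ X, ¬ Compat w a := by
    unfold PredB at h; push_neg at h
    obtain ⟨w, hw1, hw2⟩ := h
    exact ⟨w, hw1, hw2⟩
  unfold rc
  rw [dif_pos h']
  exact h'.choose_spec.2

variable (D : Set (Q × P)) (q : Q)

/-- the "cone section": elements below `ρ` whose `D`-section reaches below `t` -/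
def CSec (ρ : Q) (t : P) : Set Q := {s | s ≤ ρ ∧ ∃ t', t' ≤ t ∧ (s, t') ∈ D}

lemma CSec_nonempty (hD : OpenDense D) (ρ : Q) (t : P) : (CSec D ρ t).Nonempty := by
  obtain ⟨z, hz, hmem⟩ := hD.2 (ρ, t)
  refine ⟨z.1, hz.1, z.2, hz.2, ?_⟩
  rw [Prod.mk.eta]; exact hmem

lemma CSec_antitone {ρ : Q} {t₁ t : P} (h : t₁ ≤ t) : CSec D ρ t₁ ⊆ CSec D ρ t :=
  fun _ hs => ⟨hs.1, hs.2.choose, le_trans hs.2.choose_spec.1 h, hs.2.choose_spec.2⟩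

variable (hD : OpenDense D)

/-- the canonical run of `t` -/
noncomputable def xfun (t : P) : Ordinal.{v} → Q :=
  Ordinal.lt_wf.fix
    (fun η ih => wmin (CSec D (rc q {s | ∃ η', ∃ _ : η' < η, ih η' ‹_› = s}) t)
      (CSec_nonempty D hD _ t))

/-- the prefix set of the canonical run of `t` -/
def Xset (t : P) (η : Ordinal.{v}) : Set Q := xfun D q hD t '' Set.Iio η

lemma xfun_def (t : P) (η : Ordinal.{v}) :
    xfun D q hD t η
      = wmin (CSec D (rc q {s | ∃ η', ∃ _ : η' < η, xfun D q hD t η' = s}) t)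
          (CSec_nonempty D hD _ t) :=
  WellFounded.fix_eq _ _ _

lemma setOf_eq_Xset (t : P) (η : Ordinal.{v}) :
    {s | ∃ η', ∃ _ : η' < η, xfun D q hD t η' = s} = Xset D q hD t η := by
  ext s
  constructor
  · rintro ⟨η', h', rfl⟩; exact ⟨η', h', rfl⟩
  · rintro ⟨η', h', rfl⟩; exact ⟨η', h', rfl⟩

lemma xfun_eq (t : P) (η : Ordinal.{v}) :
    xfun D q hD t η
      = wmin (CSec D (rc q (Xset D q hD t η)) t) (CSec_nonempty D hD _ t) := by
  rw [xfun_def]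
  exact wmin_congr (by rw [setOf_eq_Xset]) _ _

lemma xfun_mem_CSec (t : P) (η : Ordinal.{v}) :
    xfun D q hD t η ∈ CSec D (rc q (Xset D q hD t η)) t := by
  rw [xfun_eq]; exact wmin_mem _ _

lemma xfun_le_rc (t : P) (η : Ordinal.{v}) :
    xfun D q hD t η ≤ rc q (Xset D q hD t η) := (xfun_mem_CSec D q hD t η).1

lemma xfun_le_q (t : P) (η : Ordinal.{v}) : xfun D q hD t η ≤ q :=
  le_trans (xfun_le_rc D q hD t η) (rc_le q _)

lemma Xset_mono (t : P) {η' η : Ordinal.{v}} (h : η' ≤ η) :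
    Xset D q hD t η' ⊆ Xset D q hD t η :=
  Set.image_mono (Set.Iio_subset_Iio h)

/-- the step condition along a run: either we have already produced a predense set,
or the next canonical element is ripe at `t`. -/
def Cstep (t : P) (η : Ordinal.{v}) : Prop :=
  PredB q (Xset D q hD t η) ∨ (xfun D q hD t η, t) ∈ D

lemma agree {t t₁ : P} (h₁ : t₁ ≤ t) {ηb : Ordinal.{v}}
    (hC : ∀ η < ηb, Cstep D q hD t η)
    (hNP : ∀ η < ηb, ¬ PredB q (Xset D q hD t η)) :
    ∀ η < ηb, xfun D q hD t₁ η = xfun D q hD t η ∧ (xfun D q hD t₁ η, t₁) ∈ D := by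
  intro η
  induction η using Ordinal.induction with
  | h η IH =>
  intro hη
  have hXeq : Xset D q hD t₁ η = Xset D q hD t η := by
    unfold Xset
    ext s
    simp only [Set.mem_image, Set.mem_Iio]
    constructor
    · rintro ⟨η', h', rfl⟩
      exact ⟨η', h', ((IH η' h' (lt_trans h' hη)).1).symm⟩
    · rintro ⟨η', h', rfl⟩
      exact ⟨η', h', (IH η' h' (lt_trans h' hη)).1⟩
  have hrip : (xfun D q hD t η, t) ∈ D := (hC η hη).resolve_left (hNP η hη)
  have hmem₁ : (xfun D q hD t η, t₁) ∈ D :=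
    hD.1 _ hrip _ (Prod.mk_le_mk.2 ⟨le_refl _, h₁⟩)
  have hS : xfun D q hD t η ∈ CSec D (rc q (Xset D q hD t η)) t₁ :=
    ⟨xfun_le_rc D q hD t η, t₁, le_refl _, hmem₁⟩
  have heq : xfun D q hD t₁ η = xfun D q hD t η := by
    rw [xfun_eq D q hD t₁ η]
    have h2 : wmin (CSec D (rc q (Xset D q hD t₁ η)) t₁) (CSec_nonempty D hD _ t₁)
        = wmin (CSec D (rc q (Xset D q hD t η)) t₁) (CSec_nonempty D hD _ t₁) :=
      wmin_congr (by rw [hXeq]) _ _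
    rw [h2]
    have h3 := wmin_eq_of_subset (CSec_antitone D h₁)
      (CSec_nonempty D hD (rc q (Xset D q hD t η)) t) (CSec_nonempty D hD _ t₁)
      (by rw [← xfun_eq D q hD t η]; exact hS)
    rw [h3, ← xfun_eq D q hD t η]
  exact ⟨heq, by rw [heq]; exact hmem₁⟩

lemma agreeX {t t₁ : P} (h₁ : t₁ ≤ t) {ηb : Ordinal.{v}}
    (hC : ∀ η < ηb, Cstep D q hD t η)
    (hNP : ∀ η < ηb, ¬ PredB q (Xset D q hD t η)) :
    Xset D q hD t₁ ηb = Xset D q hD t ηb := by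
  unfold Xset
  ext s
  simp only [Set.mem_image, Set.mem_Iio]
  constructor
  · rintro ⟨η', h', rfl⟩
    exact ⟨η', h', ((agree D q hD h₁ hC hNP η' h').1).symm⟩
  · rintro ⟨η', h', rfl⟩
    exact ⟨η', h', (agree D q hD h₁ hC hNP η' h').1⟩

lemma self_open {ξ : Ordinal.{v}} {t t₁ : P} (h₁ : t₁ ≤ t)
    (ht : ∀ η < ξ, Cstep D q hD t η) : ∀ η < ξ, Cstep D q hD t₁ η := by
  intro η hη
  by_cases hPd : PredB q (Xset D q hD t η)
  · left
    have hOne : ({η' | PredB q (Xset D q hD t η')} : Set Ordinal.{v}).Nonempty := ⟨η, hPd⟩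
    have h1 : PredB q (Xset D q hD t (Ordinal.lt_wf.min _ hOne)) :=
      Ordinal.lt_wf.min_mem _ hOne
    have hmin : ∀ η' < Ordinal.lt_wf.min _ hOne, ¬ PredB q (Xset D q hD t η') :=
      fun η' h' hp' => Ordinal.lt_wf.not_lt_min _ hp' h'
    have hle : Ordinal.lt_wf.min _ hOne ≤ η := not_lt.1 (Ordinal.lt_wf.not_lt_min _ hPd)
    have hXeq := agreeX D q hD h₁
      (fun η' h' => ht η' (lt_trans (lt_of_lt_of_le h' hle) hη)) hmin
    exact predB_mono (hXeq.symm ▸ h1) (Xset_mono D q hD t₁ hle)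
  · have hNP : ∀ η' < Order.succ η, ¬ PredB q (Xset D q hD t η') := fun η' h' hp =>
      hPd (predB_mono hp (Xset_mono D q hD t (Order.lt_succ_iff.1 h')))
    have hC' : ∀ η' < Order.succ η, Cstep D q hD t η' := fun η' h' =>
      ht η' (lt_of_le_of_lt (Order.lt_succ_iff.1 h') hη)
    exact Or.inr (agree D q hD h₁ hC' hNP η (Order.lt_succ η)).2

lemma winner {t : P} {η₀ : Ordinal.{v}}
    (hC : ∀ η < η₀, Cstep D q hD t η) (hp : PredB q (Xset D q hD t η₀)) :
    ∃ A : Set Q, MaxAntichainBelow q A ∧ ∀ a ∈ A, (a, t) ∈ D := by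
  have hOne : ({η' | PredB q (Xset D q hD t η')} : Set Ordinal.{v}).Nonempty := ⟨η₀, hp⟩
  set η₁ := Ordinal.lt_wf.min _ hOne with hη₁def
  have h1 : PredB q (Xset D q hD t η₁) := Ordinal.lt_wf.min_mem _ hOne
  have hmin : ∀ η' < η₁, ¬ PredB q (Xset D q hD t η') :=
    fun η' h' hp' => Ordinal.lt_wf.not_lt_min _ hp' h'
  have hle : η₁ ≤ η₀ := not_lt.1 (Ordinal.lt_wf.not_lt_min _ hp)
  have hrip : ∀ η < η₁, (xfun D q hD t η, t) ∈ D := fun η h =>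
    (hC η (lt_of_lt_of_le h hle)).resolve_left (hmin η h)
  have hkey : ∀ {ηa ηb : Ordinal.{v}}, ηb < ηa → ηa < η₁ →
      ¬ Compat (xfun D q hD t ηa) (xfun D q hD t ηb) := by
    intro ηa ηb h' hηa hcomp
    exact rc_spec (hmin ηa hηa) (xfun D q hD t ηb) ⟨ηb, h', rfl⟩
      (compat_mono hcomp (xfun_le_rc D q hD t ηa))
  refine ⟨Xset D q hD t η₁, ⟨?_, ?_, h1⟩, ?_⟩
  · rintro a ⟨ηa, hηa, rfl⟩ b ⟨ηb, hηb, rfl⟩ hne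
    rcases lt_trichotomy ηa ηb with h | h | h
    · exact fun hcomp => hkey h hηb (compat_symm hcomp)
    · exact absurd (by rw [h]) hne
    · exact hkey h hηa
  · rintro a ⟨ηa, hηa, rfl⟩
    exact xfun_le_q D q hD t ηa
  · rintro a ⟨ηa, hηa, rfl⟩
    exact hrip ηa hηa

lemma self_dense {κ : Cardinal.{v}} (hP : StronglyDistrib κ P) :
    ∀ ξ : Ordinal.{v}, ξ < κ.ord → ∀ p₀ : P, ∃ t, t ≤ p₀ ∧ ∀ η < ξ, Cstep D q hD t η := by
  intro ξ
  induction ξ using Ordinal.induction with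
  | h ξ IH =>
  intro hξ p₀
  rcases Ordinal.zero_or_succ_or_isSuccLimit ξ with h0 | ⟨ζ, rfl⟩ | hlim
  · subst h0
    exact ⟨p₀, le_refl _, fun η hη => absurd hη (not_lt_zero (a := η))⟩
  · have hζξ : ζ < Order.succ ζ := Order.lt_succ ζ
    have hζ : ζ < κ.ord := lt_trans hζξ hξ
    obtain ⟨t₂, ht₂, hS2⟩ := IH ζ hζξ hζ p₀
    by_cases hPd : PredB q (Xset D q hD t₂ ζ)
    · refine ⟨t₂, ht₂, fun η hη => ?_⟩
      rcases lt_or_eq_of_le (Order.lt_succ_iff.1 hη) with h | h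
      · exact hS2 η h
      · subst h
        exact Or.inl hPd
    · have hNPall : ∀ η < Order.succ ζ, ¬ PredB q (Xset D q hD t₂ η) := fun η hη hpp =>
        hPd (predB_mono hpp (Xset_mono D q hD t₂ (Order.lt_succ_iff.1 hη)))
      obtain ⟨hle_rc, t', ht', hmem⟩ := xfun_mem_CSec D q hD t₂ ζ
      refine ⟨t', le_trans ht' ht₂, fun η hη => ?_⟩
      rcases lt_or_eq_of_le (Order.lt_succ_iff.1 hη) with h | h
      · exact Or.inr (agree D q hD ht' hS2
          (fun η' h' => hNPall η' (lt_trans h' hζξ)) η h).2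
      · subst h
        right
        have hXeq : Xset D q hD t' η = Xset D q hD t₂ η :=
          agreeX D q hD ht' hS2 (fun η' h' => hNPall η' (lt_trans h' hζξ))
        have hx : xfun D q hD t' η = xfun D q hD t₂ η := by
          rw [xfun_eq D q hD t' η]
          have h2 : wmin (CSec D (rc q (Xset D q hD t' η)) t') (CSec_nonempty D hD _ t')
              = wmin (CSec D (rc q (Xset D q hD t₂ η)) t') (CSec_nonempty D hD _ t') :=
            wmin_congr (by rw [hXeq]) _ _
          rw [h2]
          have hS' : xfun D q hD t₂ η ∈ CSec D (rc q (Xset D q hD t₂ η)) t' :=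
            ⟨hle_rc, t', le_refl _, hmem⟩
          have h3 := wmin_eq_of_subset (CSec_antitone D ht')
            (CSec_nonempty D hD (rc q (Xset D q hD t₂ η)) t₂) (CSec_nonempty D hD _ t')
            (by rw [← xfun_eq D q hD t₂ η]; exact hS')
          rw [h3, ← xfun_eq D q hD t₂ η]
        rw [hx]
        exact hmem
  · obtain ⟨g, hg0, hgdesc, hgmem⟩ := hP
      (fun η => if η < ξ then {t | ∀ η' < η, Cstep D q hD t η'} else Set.univ)
      (by
        intro α hα
        by_cases h : α < ξ
        · simp only [if_pos h]
          constructor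
          · intro t ht t₁ h₁
            exact self_open D q hD h₁ ht
          · intro p'
            obtain ⟨t, h1, h2⟩ := IH α h (lt_trans h hξ) p'
            exact ⟨t, h1, h2⟩
        · simp only [if_neg h]
          exact ⟨fun _ _ _ _ => trivial, fun p' => ⟨p', le_refl _, trivial⟩⟩)
      p₀
    refine ⟨g ξ, le_trans (hgdesc 0 ξ (zero_le (a := ξ)) hξ) hg0, fun η hη => ?_⟩
    have hsucc : Order.succ η < ξ := hlim.succ_lt hη
    have hmem := hgmem (Order.succ η) (lt_trans hsucc hξ)
    simp only [if_pos hsucc] at hmem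
    exact self_open D q hD (hgdesc (Order.succ η) ξ (le_of_lt hsucc) hξ) hmem η (Order.lt_succ η)

end SEaux

/-- Lemma (strong Easton lemma, first claim): if `Q` is `κ`-cc, `P` is strongly
`<κ`-distributive, `D ⊆ Q × P` is open dense (in the product order) and `q ∈ Q`, then
the set of all `p ∈ P` for which there is a maximal antichain `A` below `q` in `Q`
with `A × {p} ⊆ D` is open dense in `P`. -/
theorem openDense_proj_of_cc_stronglyDistrib {Q : Type u} {P : Type w}
    [PartialOrder Q] [PartialOrder P] (κ : Cardinal.{u})
    (hreg : κ.IsRegular)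
    (hcc : ∀ A : Set Q, IsAntichainIncompat A → #A < κ)
    (hP : StronglyDistrib κ P)
    (D : Set (Q × P)) (hD : OpenDense D) (q : Q) :
    OpenDense {p : P |
      ∃ A : Set Q, MaxAntichainBelow q A ∧ ∀ a ∈ A, (a, p) ∈ D} := by
  constructor
  · rintro p ⟨A, hA, hAD⟩ p' hp'
    exact ⟨A, hA, fun a ha => hD.1 _ (hAD a ha) _ (Prod.mk_le_mk.2 ⟨le_refl _, hp'⟩)⟩
  · intro p
    obtain ⟨f, hf0, hfdesc, hfmem⟩ := hP
      (fun ξ => {t | ∀ η < ξ, Cstep D q hD t η})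
      (fun α hα => ⟨fun t ht t₁ h₁ => self_open D q hD h₁ ht,
        fun p₀ => self_dense D q hD hP α hα p₀⟩)
      p
    have hlimord : Order.IsSuccLimit κ.ord := Cardinal.isSuccLimit_ord hreg.aleph0_le
    by_cases hB : ∀ η < κ.ord, ¬ PredB q (Xset D q hD (f (Order.succ η)) η)
    · exfalso
      -- the global run
      set z : Ordinal.{u} → Q := fun η => xfun D q hD (f (Order.succ η)) η with hzdef
      have hBmono : ∀ η < κ.ord, ∀ η' ≤ η, ¬ PredB q (Xset D q hD (f (Order.succ η)) η') :=
        fun η hη η' h' hp' => hB η hη (predB_mono hp' (Xset_mono D q hD _ h'))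
      -- coherence of the run along the thread
      have hco : ∀ {η η' : Ordinal.{u}}, η' < η → η < κ.ord →
          xfun D q hD (f (Order.succ η)) η' = z η' := by
        intro η η' h' hη
        have hη' : η' < κ.ord := lt_trans h' hη
        have hsucc' : Order.succ η' < κ.ord := hlimord.succ_lt hη'
        have hsucc : Order.succ η < κ.ord := hlimord.succ_lt hη
        have hle : f (Order.succ η) ≤ f (Order.succ η') :=
          hfdesc _ _ (Order.succ_le_succ (le_of_lt h')) hsucc
        have hC' : ∀ η'' < Order.succ η', Cstep D q hD (f (Order.succ η')) η'' :=
          hfmem (Order.succ η') hsucc'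
        have hNP : ∀ η'' < Order.succ η', ¬ PredB q (Xset D q hD (f (Order.succ η')) η'') :=
          fun η'' h'' => hBmono η' hη' η'' (Order.lt_succ_iff.1 h'')
        exact (agree D q hD hle hC' hNP η' (Order.lt_succ η')).1
      -- pairwise incompatibility
      have hperp : ∀ {η η' : Ordinal.{u}}, η' < η → η < κ.ord → ¬ Compat (z η) (z η') := by
        intro η η' h' hη hcomp
        have hmemX : z η' ∈ Xset D q hD (f (Order.succ η)) η := ⟨η', h', hco h' hη⟩
        exact rc_spec (hB η hη) _ hmemX
          (compat_mono hcomp (xfun_le_rc D q hD (f (Order.succ η)) η))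
      -- injectivity
      have hzinj : ∀ {η η' : Ordinal.{u}}, η < κ.ord → η' < κ.ord → z η = z η' → η = η' := by
        intro η η' hη hη' he
        rcases lt_trichotomy η η' with h | h | h
        · exact absurd (by rw [he]; exact compat_self _) (hperp h hη')
        · exact h
        · exact absurd (by rw [he]; exact compat_self _) (hperp h hη)
      -- the antichain
      have hAC : IsAntichainIncompat {s : Q | ∃ η, η < κ.ord ∧ z η = s} := by
        rintro a ⟨η, hη, rfl⟩ b ⟨η', hη', rfl⟩ hne
        rcases lt_trichotomy η η' with h | h | h
        · exact fun hc => hperp h hη' (compat_symm hc)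
        · exact absurd (by rw [h]) hne
        · exact hperp h hη
      have hlt := hcc _ hAC
      have hemb : Nonempty (↥(Set.Iio κ.ord) ↪ ↥{s : Q | ∃ η, η < κ.ord ∧ z η = s}) := by
        refine ⟨⟨fun η => ⟨z η.1, η.1, η.2, rfl⟩, ?_⟩⟩
        intro η η' h
        exact Subtype.ext (hzinj η.2 η'.2 (congrArg Subtype.val h))
      have h1 : Cardinal.lift.{u} #(↥(Set.Iio κ.ord))
          ≤ Cardinal.lift.{u+1} #(↥{s : Q | ∃ η, η < κ.ord ∧ z η = s}) :=
        Cardinal.lift_mk_le'.2 hemb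
      rw [Ordinal.mk_Iio_ordinal, Cardinal.card_ord, Cardinal.lift_lift] at h1
      exact absurd (Cardinal.lift_le.1 h1) (not_le.2 hlt)
    · push_neg at hB
      obtain ⟨η, hη, hp'⟩ := hB
      have hsucc : Order.succ η < κ.ord := hlimord.succ_lt hη
      have hC' : ∀ η' < Order.succ η, Cstep D q hD (f (Order.succ η)) η' := hfmem _ hsucc
      obtain ⟨A, hmax, hinD⟩ := winner D q hD
        (fun η' h' => hC' η' (lt_trans h' (Order.lt_succ η))) hp'
      exact ⟨f (Order.succ η), le_trans (hfdesc 0 _ zero_le hsucc) hf0,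
        A, hmax, hinD⟩
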